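/- Let q ≥ 2 and n, d, L be positive integers with L ≤ n. The number of arrays W ∈ Σ_q^{[n]^d} that contain two identical L-cubes (i.e., there exist distinct u, v ∈ [n-L+1]^d with W_{u+[L]^d} = W_{v+[L]^d}) is at most n^{2d} · q^(n^d − L^d). -/
import Mathlib


/-- `W` contains two identical `L`-cubes at distinct positions `u, v ∈ ℕ^d`:
both cubes `u + [L]^d` and `v + [L]^d` fit inside `[n]^d` and the restrictions of
`W` to them agree (as functions of the offset in `[L]^d`). -/
def identicalCubesAt (n d L q : ℕ) (W : (Fin d → Fin n) → Fin q)
    (u v : Fin d → ℕ) : Prop :=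
  u ≠ v ∧ (∀ i, u i + L ≤ n) ∧ (∀ i, v i + L ≤ n) ∧
  ∀ (x y : Fin d → Fin n) (off : Fin d → Fin L),
    (∀ i, (x i : ℕ) = u i + (off i : ℕ)) → (∀ i, (y i : ℕ) = v i + (off i : ℕ)) →
    W x = W y

/-- Two arrays with the same identical-cube pattern that agree outside the `u`-cube agree
everywhere. -/
lemma cube_agree {n d L q : ℕ} {u v : Fin d → ℕ}
    (hv : ∀ i, v i + L ≤ n) {i₀ : Fin d} (hne : u i₀ ≠ v i₀)
    {W W' : (Fin d → Fin n) → Fin q}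
    (hW : ∀ (x y : Fin d → Fin n) (off : Fin d → Fin L),
      (∀ i, (x i : ℕ) = u i + (off i : ℕ)) → (∀ i, (y i : ℕ) = v i + (off i : ℕ)) →
      W x = W y)
    (hW' : ∀ (x y : Fin d → Fin n) (off : Fin d → Fin L),
      (∀ i, (x i : ℕ) = u i + (off i : ℕ)) → (∀ i, (y i : ℕ) = v i + (off i : ℕ)) →
      W' x = W' y)
    (hout : ∀ x : Fin d → Fin n, ¬ (∀ i, u i ≤ (x i : ℕ) ∧ (x i : ℕ) < u i + L) →
      W x = W' x) :
    ∀ x, W x = W' x := by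
  have key : ∀ m : ℕ, ∀ x : Fin d → Fin n,
      (if u i₀ < v i₀ then n - (x i₀ : ℕ) else (x i₀ : ℕ)) < m → W x = W' x := by
    intro m
    induction m with
    | zero => intro x hx; omega
    | succ m ih =>
      intro x hx
      by_cases hc : ∀ i, u i ≤ (x i : ℕ) ∧ (x i : ℕ) < u i + L
      · have hoff : ∀ i, (x i : ℕ) - u i < L := fun i => by have := hc i; omega
        set off : Fin d → Fin L := fun i => ⟨(x i : ℕ) - u i, hoff i⟩ with hoffdef
        have hy : ∀ i, v i + (off i : ℕ) < n := fun i => by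
          have := hv i; have := hoff i; simp only [hoffdef]; omega
        set y : Fin d → Fin n := fun i => ⟨v i + (off i : ℕ), hy i⟩ with hydef
        have hx1 : ∀ i, (x i : ℕ) = u i + (off i : ℕ) := fun i => by
          have := (hc i).1; simp only [hoffdef]; omega
        have hy1 : ∀ i, (y i : ℕ) = v i + (off i : ℕ) := fun i => rfl
        have e1 := hW x y off hx1 hy1
        have e2 := hW' x y off hx1 hy1
        have hyv : (y i₀ : ℕ) = v i₀ + ((x i₀ : ℕ) - u i₀) := rfl
        have hclt := (hc i₀).1
        have hclt2 := (hc i₀).2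
        have hxn : (x i₀ : ℕ) < n := (x i₀).isLt
        have hmy : (if u i₀ < v i₀ then n - (y i₀ : ℕ) else (y i₀ : ℕ)) < m := by
          by_cases h : u i₀ < v i₀ <;> simp only [h, if_true, if_false] <;>
            simp only [h, if_true, if_false] at hx <;> omega
        exact e1.trans ((ih y hmy).trans e2.symm)
      · exact hout x hc
  intro x
  refine key (n + 1) x ?_
  have := (x i₀).isLt
  split <;> omega

theorem stmt4 (q n d L : ℕ) (hq : 2 ≤ q) (hn : 1 ≤ n) (hd : 1 ≤ d) (hL : 1 ≤ L)
    (hLn : L ≤ n) :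
    Nat.card {W : (Fin d → Fin n) → Fin q //
        ∃ u v : Fin d → ℕ, identicalCubesAt n d L q W u v}
      ≤ n ^ (2 * d) * q ^ (n ^ d - L ^ d) := by
  classical
  set P : ((Fin d → Fin n) → Fin q) → Prop :=
    fun W => ∃ u v : Fin d → ℕ, identicalCubesAt n d L q W u v with hP
  have hcard : Nat.card {W : (Fin d → Fin n) → Fin q // P W}
      = (Finset.univ.filter P).card := by
    rw [Nat.card_eq_fintype_card, Fintype.card_subtype]
  rw [show {W : (Fin d → Fin n) → Fin q //
      ∃ u v : Fin d → ℕ, identicalCubesAt n d L q W u v} = {W // P W} from rfl, hcard]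
  set F : (Fin d → Fin n) × (Fin d → Fin n) → Finset ((Fin d → Fin n) → Fin q) :=
    fun p => Finset.univ.filter
      (fun W => identicalCubesAt n d L q W (fun i => (p.1 i : ℕ)) (fun i => (p.2 i : ℕ)))
    with hF
  have hsub : Finset.univ.filter P ⊆
      (Finset.univ : Finset ((Fin d → Fin n) × (Fin d → Fin n))).biUnion F := by
    intro W hW
    simp only [hP, Finset.mem_filter, Finset.mem_univ, true_and] at hW
    obtain ⟨u, v, h⟩ := hW
    have hu := h.2.1
    have hv := h.2.2.1
    have hun : ∀ i, u i < n := fun i => by have := hu i; omega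
    have hvn : ∀ i, v i < n := fun i => by have := hv i; omega
    refine Finset.mem_biUnion.2
      ⟨(fun i => ⟨u i, hun i⟩, fun i => ⟨v i, hvn i⟩), Finset.mem_univ _, ?_⟩
    simp only [hF, Finset.mem_filter, Finset.mem_univ, true_and]
    exact h
  refine le_trans (Finset.card_le_card hsub) (le_trans Finset.card_biUnion_le ?_)
  have hbound : ∀ p : (Fin d → Fin n) × (Fin d → Fin n),
      (F p).card ≤ q ^ (n ^ d - L ^ d) := by
    intro p
    set u : Fin d → ℕ := fun i => (p.1 i : ℕ)
    set v : Fin d → ℕ := fun i => (p.2 i : ℕ)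
    by_cases hu : ∀ i, u i + L ≤ n
    · -- injection into functions on the complement of the u-cube
      set C : Type := {x : Fin d → Fin n // ¬ (∀ i, u i ≤ (x i : ℕ) ∧ (x i : ℕ) < u i + L)}
        with hC
      have hcube : Fintype.card {x : Fin d → Fin n //
          ∀ i, u i ≤ (x i : ℕ) ∧ (x i : ℕ) < u i + L} = L ^ d := by
        have e : {x : Fin d → Fin n // ∀ i, u i ≤ (x i : ℕ) ∧ (x i : ℕ) < u i + L}
            ≃ (Fin d → Fin L) :=
          { toFun := fun x => fun i => ⟨(x.1 i : ℕ) - u i, by have := x.2 i; omega⟩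
            invFun := fun o => ⟨fun i => ⟨u i + (o i : ℕ), by
                have := (o i).isLt; have := hu i; omega⟩,
              fun i => by simp⟩
            left_inv := fun x => by
              ext i
              have := (x.2 i).1
              simp only [Fin.val_mk]
              omega
            right_inv := fun o => by
              ext i
              simp }
        rw [Fintype.card_congr e]
        simp [Fintype.card_fun]
      have hCcard : Fintype.card C = n ^ d - L ^ d := by
        have h1 : Fintype.card C = Fintype.card (Fin d → Fin n)
            - Fintype.card {x : Fin d → Fin n //
                ∀ i, u i ≤ (x i : ℕ) ∧ (x i : ℕ) < u i + L} :=
          Fintype.card_subtype_compl _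
        rw [h1, hcube]
        congr 1
        simp [Fintype.card_fun]
      have hinj : Set.InjOn (fun W : ((Fin d → Fin n) → Fin q) => fun x : C => W x.1)
          (F p : Set ((Fin d → Fin n) → Fin q)) := by
        intro W hWm W' hWm' hagree
        simp only [hF, Finset.coe_filter, Set.mem_setOf_eq, Finset.mem_univ,
          true_and] at hWm hWm'
        obtain ⟨hne, hu', hv', hcube'⟩ := hWm
        obtain ⟨_, _, _, hcube''⟩ := hWm'
        obtain ⟨i₀, hne₀⟩ := Function.ne_iff.1 hne
        funext x
        refine cube_agree hv' hne₀ hcube' hcube'' ?_ x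
        intro z hz
        exact congrFun hagree ⟨z, hz⟩
      calc (F p).card
          ≤ (Finset.univ : Finset (C → Fin q)).card :=
            Finset.card_le_card_of_injOn _ (fun _ _ => Finset.mem_univ _) hinj
        _ = q ^ (n ^ d - L ^ d) := by
            rw [Finset.card_univ, Fintype.card_fun, hCcard, Fintype.card_fin]
    · have : F p = ∅ := by
        rw [Finset.eq_empty_iff_forall_notMem]
        intro W hW
        simp only [hF, Finset.mem_filter, Finset.mem_univ, true_and] at hW
        exact hu hW.2.1
      simp [this]
  refine le_trans (Finset.sum_le_sum (fun p _ => hbound p)) ?_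
  rw [Finset.sum_const, smul_eq_mul, Finset.card_univ]
  have : Fintype.card ((Fin d → Fin n) × (Fin d → Fin n)) = n ^ (2 * d) := by
    simp [Fintype.card_fun, two_mul, pow_add]
  rw [this]
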